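/- Let G = (V₁ ∪ ⋯ ∪ V_r, E) be the complete r-partite graph with nonempty parts V₁, …, V_r satisfying |V_i| ≥ |V_{i+1}| for all i ∈ {1, …, r−1}. Define s_r = |V_r| and s_i = max{1 + s_{i+1}, |V_i|} for i = r−1, …, 1. Then η(G) = max{⌈s_i / |V_i|⌉ : i ∈ {1, …, r}}. -/

import Mathlib

open Classical in
/-- Sum of the labels `f` over the open neighborhood of `v` in `G`. -/
noncomputable def nbrSum {V : Type*} [Fintype V] (G : SimpleGraph V) (f : V → ℕ) (v : V) : ℕ :=
  ∑ w ∈ Finset.univ.filter (fun w => G.Adj v w), f w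

open Classical in
/-- The degree of `v` in `G`. -/
noncomputable def deg {V : Type*} [Fintype V] (G : SimpleGraph V) (v : V) : ℕ :=
  (Finset.univ.filter (fun w => G.Adj v w)).card

/-- `f : V → {1,…,k}` is an additive `k`-coloring of `G`: labels lie in `{1,…,k}` and
adjacent vertices get distinct open-neighborhood sums. -/
def IsAdditiveColoring {V : Type*} [Fintype V] (G : SimpleGraph V) (k : ℕ) (f : V → ℕ) : Prop :=
  (∀ v, 1 ≤ f v ∧ f v ≤ k) ∧ ∀ u v, G.Adj u v → nbrSum G f u ≠ nbrSum G f v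

/-- The additive chromatic number `η(G)`: the least `k` admitting an additive `k`-coloring. -/
noncomputable def eta {V : Type*} [Fintype V] (G : SimpleGraph V) : ℕ :=
  sInf {k | ∃ f : V → ℕ, IsAdditiveColoring G k f}

open Classical in
/-- For the complete `r`-partite graph with parts of weakly decreasing sizes
`n 0 ≥ n 1 ≥ ⋯ ≥ n (r-1)`, with `s (r-1) = n (r-1)` and
`s i = max (1 + s (i+1)) (n i)`, we have `η(G) = max_i ⌈s i / n i⌉`. -/
theorem eta_complete_multipartite {V : Type*} [Fintype V] (G : SimpleGraph V)
    (r : ℕ) (hr : 1 ≤ r) (p : V → ℕ) (hp : ∀ v, p v < r)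
    (hadj : ∀ u v, G.Adj u v ↔ p u ≠ p v)
    (n : ℕ → ℕ) (hn : ∀ i, n i = (Finset.univ.filter fun v => p v = i).card)
    (hne : ∀ i < r, 0 < n i)
    (hmono : ∀ i, i + 1 < r → n (i + 1) ≤ n i)
    (s : ℕ → ℕ) (hslast : s (r - 1) = n (r - 1))
    (hs : ∀ i, i + 1 < r → s i = max (1 + s (i + 1)) (n i)) :
    eta G = (Finset.range r).sup fun i => s i ⌈/⌉ n i := by
  classical
  set k := (Finset.range r).sup fun i => s i ⌈/⌉ n i with hkdef
  -- n is antitone on [0, r)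
  have hmono' : ∀ a b, a ≤ b → b < r → n b ≤ n a := by
    intro a b
    induction b with
    | zero => intro h _; interval_cases a; exact le_rfl
    | succ b ih =>
      intro hab hbr
      rcases Nat.eq_or_lt_of_le hab with h | h
      · rw [h]
      · exact le_trans (hmono b hbr) (ih (by omega) (by omega))
  -- s i ≥ n (i+d) + d
  have hsge : ∀ d i, i + d < r → n (i + d) + d ≤ s i := by
    intro d
    induction d with
    | zero =>
      intro i hi
      by_cases h : i + 1 < r
      · rw [hs i h]
        simp only [Nat.add_zero]
        exact le_max_right (1 + s (i + 1)) (n i)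
      · have hieq : i = r - 1 := by omega
        subst hieq; rw [hslast]; simp
    | succ d ih =>
      intro i hi
      have h1 : i + 1 < r := by omega
      have h2 := ih (i + 1) (by omega)
      rw [hs i h1]
      have e : i + 1 + d = i + (d + 1) := by omega
      rw [e] at h2
      omega
  -- s i ≤ n (i+d) + d for some d
  have hsle : ∀ m i, r = i + m + 1 → ∃ d, i + d < r ∧ s i ≤ n (i + d) + d := by
    intro m
    induction m with
    | zero =>
      intro i h
      refine ⟨0, by omega, ?_⟩
      have h2 := hslast
      rw [show r - 1 = i from by omega] at h2
      simp [h2]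
    | succ m ih =>
      intro i h
      obtain ⟨d, hd, hle⟩ := ih (i + 1) (by omega)
      have h1 : i + 1 < r := by omega
      rw [hs i h1]
      rcases le_total (1 + s (i + 1)) (n i) with h' | h'
      · refine ⟨0, by omega, ?_⟩
        simp only [Nat.add_zero]
        omega
      · refine ⟨d + 1, by omega, ?_⟩
        have e : i + 1 + d = i + (d + 1) := by omega
        rw [e] at hle
        omega
  -- s strictly decreasing on [0, r)
  have hanti : ∀ j i, i < j → j < r → s j < s i := by
    intro j
    induction j with
    | zero => omega
    | succ j ih =>
      intro i hij hjr
      have hstep : s (j + 1) < s j := by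
        rw [hs j hjr]; omega
      rcases Nat.eq_or_lt_of_le (Nat.lt_succ_iff.mp hij) with h | h
      · rw [h]; exact hstep
      · exact lt_trans hstep (ih i h (by omega))
  -- k ≥ 1
  have h0r : (0 : ℕ) ∈ Finset.range r := Finset.mem_range.2 hr
  have hk1 : 1 ≤ k := by
    have hle : s 0 ⌈/⌉ n 0 ≤ k := Finset.le_sup (f := fun i => s i ⌈/⌉ n i) h0r
    have hn0 : 0 < n 0 := hne 0 hr
    have hs0 : 0 < s 0 := by
      have := hsge 0 0 hr
      simp only [Nat.add_zero, Nat.zero_add] at this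
      omega
    refine le_trans ?_ hle
    by_contra hcon
    have h0 : s 0 ⌈/⌉ n 0 ≤ 0 := by omega
    have h1 := (ceilDiv_le_iff_le_mul hn0).1 h0
    simp only [Nat.mul_zero] at h1
    omega
  -- the parts
  set P : ℕ → Finset V := fun i => Finset.univ.filter (fun v => p v = i) with hP
  have hcard : ∀ i, (P i).card = n i := fun i => (hn i).symm
  -- neighborhood sum identity
  have keysum : ∀ (f : V → ℕ) (u : V), nbrSum G f u + ∑ v ∈ P (p u), f v = ∑ v, f v := by
    intro f u
    have hfil : Finset.univ.filter (fun w => G.Adj u w)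
        = Finset.univ.filter (fun w => ¬ p w = p u) := by
      ext w
      simp only [Finset.mem_filter, Finset.mem_univ, true_and, hadj]
      exact ⟨fun h => fun h2 => h h2.symm, fun h => fun h2 => h h2.symm⟩
    rw [nbrSum, hfil, hP]
    rw [add_comm]
    exact Finset.sum_filter_add_sum_filter_not Finset.univ (fun w => p w = p u) f
  -- bounds on s relative to k
  have hkn : ∀ i, i < r → n i ≤ s i ∧ s i ≤ k * n i := by
    intro i hi
    constructor
    · simpa using hsge 0 i (by omega)
    · have h1 : s i ⌈/⌉ n i ≤ k :=
        Finset.le_sup (f := fun i => s i ⌈/⌉ n i) (Finset.mem_range.2 hi)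
      have h2 := (ceilDiv_le_iff_le_mul (hne i hi)).1 h1
      rw [mul_comm] at h2; exact h2
  -- filling a part with labels summing to a target
  have hfill : ∀ (A : Finset V) (S : ℕ), A.card ≤ S → S ≤ k * A.card →
      ∃ f : V → ℕ, (∀ v ∈ A, 1 ≤ f v ∧ f v ≤ k) ∧ ∑ v ∈ A, f v = S := by
    intro A
    induction A using Finset.induction_on with
    | empty =>
      intro S h1 h2
      simp only [Finset.card_empty, mul_zero, Nat.le_zero] at h2
      exact ⟨fun _ => 1, by simp, by simp [h2]⟩
    | insert a A' ha ih =>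
      intro S h1 h2
      rw [Finset.card_insert_of_notMem ha] at h1 h2
      have hmul : k * (A'.card + 1) = k * A'.card + k := by ring
      have hkm : A'.card ≤ k * A'.card := Nat.le_mul_of_pos_left A'.card hk1
      obtain ⟨c, hc1, hc2, hc3, hc4⟩ :
          ∃ c, 1 ≤ c ∧ c ≤ k ∧ A'.card + c ≤ S ∧ S - c ≤ k * A'.card := by
        rcases le_total k (S - A'.card) with h | h
        · exact ⟨k, hk1, le_rfl, by omega, by omega⟩
        · exact ⟨S - A'.card, by omega, by omega, by omega, by omega⟩
      obtain ⟨f, hf1, hf2⟩ := ih (S - c) (by omega) (by omega)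
      refine ⟨Function.update f a c, ?_, ?_⟩
      · intro v hv
        rcases Finset.mem_insert.1 hv with h | h
        · rw [h, Function.update_self]; omega
        · rw [Function.update_of_ne (by rintro rfl; exact ha h)]
          exact hf1 v h
      · rw [Finset.sum_insert ha, Function.update_self]
        have : ∑ v ∈ A', Function.update f a c v = ∑ v ∈ A', f v := by
          apply Finset.sum_congr rfl
          intro v hv
          rw [Function.update_of_ne (by rintro rfl; exact ha hv)]
        rw [this, hf2]
        omega
  -- choose labels per part
  have hex : ∀ i, ∃ g : V → ℕ,
      i < r → (∀ v ∈ P i, 1 ≤ g v ∧ g v ≤ k) ∧ ∑ v ∈ P i, g v = s i := by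
    intro i
    by_cases hi : i < r
    · obtain ⟨g, hg1, hg2⟩ := hfill (P i) (s i)
        (by rw [hcard]; exact (hkn i hi).1) (by rw [hcard]; exact (hkn i hi).2)
      exact ⟨g, fun _ => ⟨hg1, hg2⟩⟩
    · exact ⟨fun _ => 1, fun h => absurd h hi⟩
  choose g hg using hex
  set F : V → ℕ := fun v => g (p v) v with hFdef
  have hmemP : ∀ v : V, v ∈ P (p v) := by intro v; simp [hP]
  have hFb : ∀ v, 1 ≤ F v ∧ F v ≤ k := fun v => (hg (p v) (hp v)).1 v (hmemP v)
  have hTF : ∀ i, i < r → ∑ v ∈ P i, F v = s i := by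
    intro i hi
    rw [← (hg i hi).2]
    apply Finset.sum_congr rfl
    intro v hv
    have : p v = i := by simpa [hP] using hv
    simp [hFdef, this]
  have hcol : IsAdditiveColoring G k F := by
    refine ⟨hFb, ?_⟩
    intro u v huv
    have hpuv : p u ≠ p v := (hadj u v).1 huv
    have h1 := keysum F u
    have h2 := keysum F v
    rw [hTF (p u) (hp u)] at h1
    rw [hTF (p v) (hp v)] at h2
    intro hcon
    have : s (p u) = s (p v) := by omega
    rcases lt_or_gt_of_ne hpuv with h | h
    · exact absurd this (Nat.ne_of_gt (hanti (p v) (p u) h (hp v)))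
    · exact absurd this (Nat.ne_of_lt (hanti (p u) (p v) h (hp u)))
  have hkmem : k ∈ {k | ∃ f : V → ℕ, IsAdditiveColoring G k f} := ⟨F, hcol⟩
  -- lower bound: any coloring needs at least k colors
  have hlow : ∀ b ∈ {k | ∃ f : V → ℕ, IsAdditiveColoring G k f}, k ≤ b := by
    rintro b ⟨f, hf1, hf2⟩
    rw [hkdef]
    apply Finset.sup_le
    intro i hi
    rw [Finset.mem_range] at hi
    set T : ℕ → ℕ := fun j => ∑ v ∈ P j, f v with hT
    have hT1 : ∀ j, j < r → n j ≤ T j := by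
      intro j hj
      calc n j = (P j).card * 1 := by rw [hcard]; ring
        _ ≤ T j := Finset.card_nsmul_le_sum (P j) f 1 (fun v _ => (hf1 v).1)
    have hT2 : ∀ j, j < r → T j ≤ b * n j := by
      intro j hj
      calc T j ≤ (P j).card * b := Finset.sum_le_card_nsmul (P j) f b (fun v _ => (hf1 v).2)
        _ = b * n j := by rw [hcard]; ring
    have hTinj : ∀ x y, x < r → y < r → x ≠ y → T x ≠ T y := by
      intro x y hx hy hxy
      have hxne : (P x).Nonempty := by
        rw [← Finset.card_pos, hcard]; exact hne x hx
      have hyne : (P y).Nonempty := by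
        rw [← Finset.card_pos, hcard]; exact hne y hy
      obtain ⟨u, hu⟩ := hxne
      obtain ⟨v, hv⟩ := hyne
      have hpu : p u = x := by simpa [hP] using hu
      have hpv : p v = y := by simpa [hP] using hv
      have hadjuv : G.Adj u v := (hadj u v).2 (by rw [hpu, hpv]; exact hxy)
      have hne' := hf2 u v hadjuv
      have h1 := keysum f u
      have h2 := keysum f v
      rw [hpu] at h1; rw [hpv] at h2
      intro hcon
      apply hne'
      have hTx : T x = ∑ v ∈ P x, f v := rfl
      have hTy : T y = ∑ v ∈ P y, f v := rfl
      omega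
    -- key counting: for i ≤ j < r, n j + (j - i) ≤ b * n i
    have hcount : ∀ j, i ≤ j → j < r → n j + (j - i) ≤ b * n i := by
      intro j hij hjr
      have himg : ((Finset.Icc i j).image T).card = j - i + 1 := by
        rw [Finset.card_image_of_injOn, Nat.card_Icc]
        · omega
        · intro x hx y hy hxy
          simp only [Finset.coe_Icc, Set.mem_Icc] at hx hy
          by_contra hne'
          exact hTinj x y (by omega) (by omega) hne' hxy
      have hsub : (Finset.Icc i j).image T ⊆ Finset.Icc (n j) (b * n i) := by
        intro x hx
        rw [Finset.mem_image] at hx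
        obtain ⟨l, hl, rfl⟩ := hx
        rw [Finset.mem_Icc] at hl
        rw [Finset.mem_Icc]
        constructor
        · exact le_trans (hmono' l j hl.2 hjr) (hT1 l (by omega))
        · exact le_trans (hT2 l (by omega))
            (Nat.mul_le_mul_left b (hmono' i l hl.1 (by omega)))
      have hcle := Finset.card_le_card hsub
      rw [himg, Nat.card_Icc] at hcle
      have hnj : n j ≤ b * n i := by
        have h1 := hT1 j hjr
        have h2 := hT2 j hjr
        have h3 := Nat.mul_le_mul_left b (hmono' i j hij hjr)
        omega
      omega
    obtain ⟨d, hd, hled⟩ := hsle (r - 1 - i) i (by omega)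
    have := hcount (i + d) (by omega) hd
    rw [ceilDiv_le_iff_le_mul (hne i hi), mul_comm]
    omega
  exact le_antisymm (Nat.sInf_le hkmem) (le_csInf ⟨k, hkmem⟩ hlow)
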